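/- Let x be cofibrant and y fibrant in a model category. Then two maps f, g : x → y are left homotopic if and only if they are right homotopic, and this homotopy relation is an equivalence relation on Hom(x, y). -/

import Mathlib

open CategoryTheory CategoryTheory.Limits

universe v u

variable (C : Type u) [Category.{v} C] [HasFiniteLimits C] [HasFiniteColimits C]

/-- A (closed) model category structure on a finitely complete and cocomplete category `C`:
three classes of morphisms (weak equivalences, cofibrations, fibrations) such that the weak
equivalences contain the isomorphisms and satisfy 2-out-of-3, cofibrations lift against
trivial fibrations and trivial cofibrations lift against fibrations, and every morphism
factors both as a trivial cofibration followed by a fibration and as a cofibration followed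
by a trivial fibration. -/
structure ModelStr where
  W : MorphismProperty C
  Cof : MorphismProperty C
  Fib : MorphismProperty C
  w_of_iso : ∀ {x y : C} (f : x ⟶ y), IsIso f → W f
  w_comp : ∀ {x y z : C} (f : x ⟶ y) (g : y ⟶ z), W f → W g → W (f ≫ g)
  w_cancel_left : ∀ {x y z : C} (f : x ⟶ y) (g : y ⟶ z), W f → W (f ≫ g) → W g
  w_cancel_right : ∀ {x y z : C} (f : x ⟶ y) (g : y ⟶ z), W g → W (f ≫ g) → W f
  w_retract : ∀ {x y x' y' : C} (f : x ⟶ y) (f' : x' ⟶ y'),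
    (∃ (i : x ⟶ x') (r : x' ⟶ x) (j : y ⟶ y') (s : y' ⟶ y),
      i ≫ r = 𝟙 x ∧ j ≫ s = 𝟙 y ∧ i ≫ f' = f ≫ j ∧ r ≫ f = f' ≫ s) → W f' → W f
  cof_retract : ∀ {x y x' y' : C} (f : x ⟶ y) (f' : x' ⟶ y'),
    (∃ (i : x ⟶ x') (r : x' ⟶ x) (j : y ⟶ y') (s : y' ⟶ y),
      i ≫ r = 𝟙 x ∧ j ≫ s = 𝟙 y ∧ i ≫ f' = f ≫ j ∧ r ≫ f = f' ≫ s) → Cof f' → Cof f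
  fib_retract : ∀ {x y x' y' : C} (f : x ⟶ y) (f' : x' ⟶ y'),
    (∃ (i : x ⟶ x') (r : x' ⟶ x) (j : y ⟶ y') (s : y' ⟶ y),
      i ≫ r = 𝟙 x ∧ j ≫ s = 𝟙 y ∧ i ≫ f' = f ≫ j ∧ r ≫ f = f' ≫ s) → Fib f' → Fib f
  lift : ∀ {a b x y : C} (i : a ⟶ b) (p : x ⟶ y), Cof i → Fib p → (W i ∨ W p) →
    HasLiftingProperty i p
  fact_cof_triv_fib : ∀ {x y : C} (f : x ⟶ y), ∃ (z : C) (i : x ⟶ z) (p : z ⟶ y),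
    Cof i ∧ Fib p ∧ W p ∧ i ≫ p = f
  fact_triv_cof_fib : ∀ {x y : C} (f : x ⟶ y), ∃ (z : C) (i : x ⟶ z) (p : z ⟶ y),
    Cof i ∧ W i ∧ Fib p ∧ i ≫ p = f

variable {C}

/-- A cylinder object for `x`: a factorization of the fold map `x ⊔ x → x` as a cofibration
followed by a weak equivalence. -/
structure Cylinder (M : ModelStr C) (x : C) where
  obj : C
  i : (x ⨿ x : C) ⟶ obj
  p : obj ⟶ x
  cof_i : M.Cof i
  w_p : M.W p
  fac : i ≫ p = coprod.desc (𝟙 x) (𝟙 x)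

/-- A path object for `y`: a factorization of the diagonal `y → y × y` as a weak equivalence
followed by a fibration. -/
structure PathObj (M : ModelStr C) (y : C) where
  obj : C
  s : y ⟶ obj
  p : obj ⟶ (y ⨯ y : C)
  w_s : M.W s
  fib_p : M.Fib p
  fac : s ≫ p = prod.lift (𝟙 y) (𝟙 y)

/-- Two maps `f g : x ⟶ y` are left homotopic if some cylinder object for `x` admits a map to
`y` restricting to `f` and `g` on the two inclusions of `x`. -/
def LeftHomotopic (M : ModelStr C) {x y : C} (f g : x ⟶ y) : Prop :=
  ∃ (cyl : Cylinder M x) (H : cyl.obj ⟶ y),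
    coprod.inl ≫ cyl.i ≫ H = f ∧ coprod.inr ≫ cyl.i ≫ H = g

/-- Two maps `f g : x ⟶ y` are right homotopic if `x` admits a map to some path object for `y`
projecting to `f` and `g` under the two projections to `y`. -/
def RightHomotopic (M : ModelStr C) {x y : C} (f g : x ⟶ y) : Prop :=
  ∃ (P : PathObj M y) (H : x ⟶ P.obj),
    H ≫ P.p ≫ prod.fst = f ∧ H ≫ P.p ≫ prod.snd = g

/-- An object is cofibrant if the map from the initial object is a cofibration. -/
def Cofibrant (M : ModelStr C) (x : C) : Prop := M.Cof (initial.to x)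

/-- An object is fibrant if the map to the terminal object is a fibration. -/
def Fibrant (M : ModelStr C) (x : C) : Prop := M.Fib (terminal.from x)

section Aux

attribute [local simp] coprod.inl_desc coprod.inr_desc coprod.inl_desc_assoc coprod.inr_desc_assoc prod.lift_fst prod.lift_snd prod.lift_fst_assoc prod.lift_snd_assoc prod.comp_lift coprod.desc_comp

variable (M : ModelStr C)

/-- A map with the LLP against all trivial fibrations is a cofibration. -/
lemma cof_of_llp {a b : C} (f : a ⟶ b)
    (h : ∀ {e b' : C} (p : e ⟶ b'), M.Fib p → M.W p → HasLiftingProperty f p) : M.Cof f := by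
  obtain ⟨z, i, p, hi, hp, hwp, hfac⟩ := M.fact_cof_triv_fib f
  haveI := h p hp hwp
  have sq : CommSq i f p (𝟙 b) := ⟨by simp [hfac]⟩
  exact M.cof_retract f i ⟨𝟙 a, 𝟙 a, sq.lift, p, by simp, sq.fac_right, by
    simp [sq.fac_left], by simp [hfac]⟩ hi

/-- A map with the RLP against all trivial cofibrations is a fibration. -/
lemma fib_of_rlp {e b : C} (f : e ⟶ b)
    (h : ∀ {a a' : C} (i : a ⟶ a'), M.Cof i → M.W i → HasLiftingProperty i f) : M.Fib f := by
  obtain ⟨z, i, p, hi, hwi, hp, hfac⟩ := M.fact_triv_cof_fib f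
  haveI := h i hi hwi
  have sq : CommSq (𝟙 e) i f p := ⟨by simp [hfac]⟩
  exact M.fib_retract f p ⟨i, sq.lift, 𝟙 b, 𝟙 b, sq.fac_left, by simp, by
    simp [hfac], by simp [sq.fac_right]⟩ hp

lemma cof_comp {a b c : C} (f : a ⟶ b) (g : b ⟶ c) (hf : M.Cof f) (hg : M.Cof g) :
    M.Cof (f ≫ g) := by
  refine cof_of_llp M _ (fun p hp hwp => ?_)
  haveI := M.lift f p hf hp (Or.inr hwp)
  haveI := M.lift g p hg hp (Or.inr hwp)
  infer_instance

lemma fib_comp {a b c : C} (f : a ⟶ b) (g : b ⟶ c) (hf : M.Fib f) (hg : M.Fib g) :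
    M.Fib (f ≫ g) := by
  refine fib_of_rlp M _ (fun i hi hwi => ?_)
  haveI := M.lift i f hi hf (Or.inl hwi)
  haveI := M.lift i g hi hg (Or.inl hwi)
  infer_instance

lemma cof_iso_comp {a a' b : C} (e : a ⟶ a') [IsIso e] (f : a' ⟶ b) (hf : M.Cof f) :
    M.Cof (e ≫ f) :=
  M.cof_retract (e ≫ f) f ⟨e, inv e, 𝟙 b, 𝟙 b, by simp, by simp, by simp, by simp⟩ hf

lemma cof_comp_iso {a b b' : C} (f : a ⟶ b) (e : b ⟶ b') [IsIso e] (hf : M.Cof f) :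
    M.Cof (f ≫ e) :=
  M.cof_retract (f ≫ e) f ⟨𝟙 a, 𝟙 a, inv e, e, by simp, by simp, by simp, by simp⟩ hf

lemma cof_inl {x : C} (hx : Cofibrant M x) : M.Cof (coprod.inl : x ⟶ x ⨿ x) := by
  refine cof_of_llp M _ (fun p hp hwp => ?_)
  refine ⟨fun {u v} sq => ?_⟩
  haveI := M.lift (initial.to x) p hx hp (Or.inr hwp)
  have sq' : CommSq (initial.to _) (initial.to x) p (coprod.inr ≫ v) :=
    ⟨initial.hom_ext _ _⟩
  refine ⟨⟨⟨coprod.desc u sq'.lift, by simp, ?_⟩⟩⟩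
  apply coprod.hom_ext
  · simpa using sq.w
  · simpa using sq'.fac_right

lemma cof_inr {x : C} (hx : Cofibrant M x) : M.Cof (coprod.inr : x ⟶ x ⨿ x) := by
  have : (coprod.inr : x ⟶ x ⨿ x) = coprod.inl ≫ (coprod.braiding x x).hom := by simp
  rw [this]
  exact cof_comp_iso M _ _ (cof_inl M hx)

lemma fib_fst {y : C} (hy : Fibrant M y) : M.Fib (prod.fst : y ⨯ y ⟶ y) := by
  refine fib_of_rlp M _ (fun i hi hwi => ?_)
  refine ⟨fun {u v} sq => ?_⟩
  haveI := M.lift i (terminal.from y) hi hy (Or.inl hwi)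
  have sq' : CommSq (u ≫ prod.snd) i (terminal.from y) (terminal.from _) :=
    ⟨terminal.hom_ext _ _⟩
  refine ⟨⟨⟨prod.lift v sq'.lift, ?_, by simp⟩⟩⟩
  apply Limits.prod.hom_ext
  · simpa using sq.w.symm
  · simpa using sq'.fac_left

/-- Every object has a cylinder object. -/
lemma exists_cylinder (x : C) : Nonempty (Cylinder M x) := by
  obtain ⟨z, i, p, hi, hp, hwp, hfac⟩ := M.fact_cof_triv_fib (coprod.desc (𝟙 x) (𝟙 x))
  exact ⟨⟨z, i, p, hi, hwp, hfac⟩⟩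

/-- Every object has a path object. -/
lemma exists_pathObj (y : C) : Nonempty (PathObj M y) := by
  obtain ⟨z, i, p, hi, hwi, hp, hfac⟩ := M.fact_triv_cof_fib (prod.lift (𝟙 y) (𝟙 y))
  exact ⟨⟨z, i, p, hwi, hp, hfac⟩⟩

lemma w_inl_i {x : C} (cyl : Cylinder M x) : M.W (coprod.inl ≫ cyl.i) := by
  apply M.w_cancel_right _ cyl.p cyl.w_p
  have : (coprod.inl ≫ cyl.i) ≫ cyl.p = 𝟙 x := by
    rw [Category.assoc, cyl.fac]; simp
  rw [this]
  exact M.w_of_iso _ inferInstance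

lemma w_inr_i {x : C} (cyl : Cylinder M x) : M.W (coprod.inr ≫ cyl.i) := by
  apply M.w_cancel_right _ cyl.p cyl.w_p
  have : (coprod.inr ≫ cyl.i) ≫ cyl.p = 𝟙 x := by
    rw [Category.assoc, cyl.fac]; simp
  rw [this]
  exact M.w_of_iso _ inferInstance

lemma w_p_fst {y : C} (P : PathObj M y) : M.W (P.p ≫ prod.fst) := by
  apply M.w_cancel_left P.s _ P.w_s
  have : P.s ≫ P.p ≫ prod.fst = 𝟙 y := by
    rw [← Category.assoc, P.fac]; simp
  rw [this]
  exact M.w_of_iso _ inferInstance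

lemma inl_i_p {x z : C} (cyl : Cylinder M x) (k : x ⟶ z) :
    coprod.inl ≫ cyl.i ≫ cyl.p ≫ k = k := by
  rw [← Category.assoc cyl.i, cyl.fac]; simp

lemma inr_i_p {x z : C} (cyl : Cylinder M x) (k : x ⟶ z) :
    coprod.inr ≫ cyl.i ≫ cyl.p ≫ k = k := by
  rw [← Category.assoc cyl.i, cyl.fac]; simp

lemma s_p_fst {y : C} (P : PathObj M y) : P.s ≫ P.p ≫ prod.fst = 𝟙 y := by
  rw [← Category.assoc, P.fac]; simp

lemma s_p_snd {y : C} (P : PathObj M y) : P.s ≫ P.p ≫ prod.snd = 𝟙 y := by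
  rw [← Category.assoc, P.fac]; simp

lemma left_to_right {x y : C} (hx : Cofibrant M x) (f g : x ⟶ y) :
    LeftHomotopic M f g → RightHomotopic M f g := by
  rintro ⟨cyl, H, hf, hg⟩
  obtain ⟨P⟩ := exists_pathObj M y
  have hcof : M.Cof (coprod.inl ≫ cyl.i) := cof_comp M _ _ (cof_inl M hx) cyl.cof_i
  haveI := M.lift (coprod.inl ≫ cyl.i) P.p hcof P.fib_p (Or.inl (w_inl_i M cyl))
  have sq : CommSq (f ≫ P.s) (coprod.inl ≫ cyl.i) P.p (prod.lift (cyl.p ≫ f) H) := by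
    constructor
    rw [Category.assoc, P.fac]
    apply Limits.prod.hom_ext
    · simp only [Category.assoc, prod.comp_lift, prod.lift_fst, Category.comp_id]
      exact (inl_i_p M cyl f).symm
    · simpa using hf.symm
  refine ⟨P, (coprod.inr ≫ cyl.i) ≫ sq.lift, ?_, ?_⟩
  · simp only [Category.assoc]
    rw [← Category.assoc sq.lift, sq.fac_right]
    simp only [Category.assoc, prod.lift_fst]
    exact inr_i_p M cyl f
  · simp only [Category.assoc]
    rw [← Category.assoc sq.lift, sq.fac_right]
    simpa using hg

lemma right_to_left {x y : C} (hy : Fibrant M y) (f g : x ⟶ y) :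
    RightHomotopic M f g → LeftHomotopic M f g := by
  rintro ⟨P, K, hf, hg⟩
  obtain ⟨cyl⟩ := exists_cylinder M x
  have hfib : M.Fib (P.p ≫ prod.fst) := fib_comp M _ _ P.fib_p (fib_fst M hy)
  haveI := M.lift cyl.i (P.p ≫ prod.fst) cyl.cof_i hfib (Or.inr (w_p_fst M P))
  have hs1 := s_p_fst M P
  have hs2 := s_p_snd M P
  have hcf : cyl.i ≫ cyl.p ≫ f = coprod.desc f f := by
    rw [← Category.assoc, cyl.fac]
    apply coprod.hom_ext <;> simp
  have sq : CommSq (coprod.desc (f ≫ P.s) K) cyl.i (P.p ≫ prod.fst) (cyl.p ≫ f) := by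
    constructor
    rw [hcf]
    apply coprod.hom_ext
    · simp [hs1]
    · simp [hf]
  refine ⟨cyl, sq.lift ≫ P.p ≫ prod.snd, ?_, ?_⟩
  · rw [← Category.assoc cyl.i sq.lift, sq.fac_left]
    simp [hs2]
  · rw [← Category.assoc cyl.i sq.lift, sq.fac_left]
    simpa using hg

lemma left_refl {x y : C} (f : x ⟶ y) : LeftHomotopic M f f := by
  obtain ⟨cyl⟩ := exists_cylinder M x
  exact ⟨cyl, cyl.p ≫ f, inl_i_p M cyl f, inr_i_p M cyl f⟩

lemma left_symm {x y : C} (f g : x ⟶ y) : LeftHomotopic M f g → LeftHomotopic M g f := by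
  rintro ⟨cyl, H, hf, hg⟩
  refine ⟨⟨cyl.obj, (coprod.braiding x x).hom ≫ cyl.i, cyl.p,
    cof_iso_comp M _ _ cyl.cof_i, cyl.w_p, ?_⟩, H, ?_, ?_⟩
  · rw [Category.assoc, cyl.fac]
    apply coprod.hom_ext <;> simp
  · simpa using hg
  · simpa using hf

lemma trans_aux {x y : C} (hx : Cofibrant M x) (f g h : x ⟶ y) :
    LeftHomotopic M f g → RightHomotopic M g h → RightHomotopic M f h := by
  rintro ⟨cyl, H, hf, hg⟩ ⟨P, K, hK1, hK2⟩
  have hcof : M.Cof (coprod.inr ≫ cyl.i) := cof_comp M _ _ (cof_inr M hx) cyl.cof_i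
  haveI := M.lift (coprod.inr ≫ cyl.i) P.p hcof P.fib_p (Or.inl (w_inr_i M cyl))
  have sq : CommSq K (coprod.inr ≫ cyl.i) P.p (prod.lift H (cyl.p ≫ h)) := by
    constructor
    apply Limits.prod.hom_ext
    · simpa using hK1.trans hg.symm
    · simp only [Category.assoc, prod.comp_lift, prod.lift_snd]
      rw [hK2]
      exact (inr_i_p M cyl h).symm
  refine ⟨P, (coprod.inl ≫ cyl.i) ≫ sq.lift, ?_, ?_⟩
  · simp only [Category.assoc]
    rw [← Category.assoc sq.lift, sq.fac_right]
    simpa using hf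
  · simp only [Category.assoc]
    rw [← Category.assoc sq.lift, sq.fac_right]
    simp only [Category.assoc, prod.lift_snd]
    exact inl_i_p M cyl h

end Aux

/-- If `x` is cofibrant and `y` is fibrant in a model category, then two maps `f g : x ⟶ y`
are left homotopic if and only if they are right homotopic, and this homotopy relation is an
equivalence relation on `Hom(x, y)`. -/
theorem stmt_15 (M : ModelStr C) (x y : C) (hx : Cofibrant M x) (hy : Fibrant M y) :
    (∀ f g : x ⟶ y, LeftHomotopic M f g ↔ RightHomotopic M f g) ∧
    _root_.Equivalence (fun f g : x ⟶ y => LeftHomotopic M f g) := by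
  refine ⟨fun f g => ⟨left_to_right M hx f g, right_to_left M hy f g⟩,
    fun f => left_refl M f, fun {f g} => left_symm M f g, fun {f g h} hfg hgh => ?_⟩
  exact right_to_left M hy f h
    (trans_aux M hx f g h hfg (left_to_right M hx g h hgh))
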